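/- arXiv:2602.20504 — 3 statements merged into one kernel-verified Lean document; each statement's English description precedes it below -/
import Mathlib

section
/- Let G = (V,E) be a finite simple connected graph of order n ≥ 2. Then the independence number of the splitting graph S(G) equals n + β₀*(G), i.e., β₀(S(G)) = n + β₀*(G). -/
/-- A finset `S` is independent in `G` if no two of its vertices are adjacent. -/
def IsIndepFinset {V : Type*} (G : SimpleGraph V) (S : Finset V) : Prop :=
  ∀ u ∈ S, ∀ v ∈ S, ¬ G.Adj u v

open Classical in
/-- The neighborhood `N(S)` of a finset `S` in `G`: all vertices adjacent to some vertex of `S`. -/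
noncomputable def nbhdSet {V : Type*} [Fintype V] (G : SimpleGraph V) (S : Finset V) : Finset V :=
  Finset.univ.filter fun v => ∃ u ∈ S, G.Adj u v

/-- The independence number `β₀(G)`: maximum size of an independent set. -/
noncomputable def indepNum {V : Type*} [Fintype V] (G : SimpleGraph V) : ℕ :=
  sSup {k : ℕ | ∃ S : Finset V, IsIndepFinset G S ∧ S.card = k}

/-- A finset `C` is a vertex cover of `G` if it meets every edge. -/
def IsVertexCover {V : Type*} (G : SimpleGraph V) (C : Finset V) : Prop :=
  ∀ u v, G.Adj u v → u ∈ C ∨ v ∈ C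

/-- The vertex cover number `α₀(G)`: minimum size of a vertex cover. -/
noncomputable def coverNum {V : Type*} [Fintype V] (G : SimpleGraph V) : ℕ :=
  sInf {k : ℕ | ∃ C : Finset V, IsVertexCover G C ∧ C.card = k}

/-- `β₀*(G) = max {|S| - |N(S)| : S independent in G}`. -/
noncomputable def betaStar {V : Type*} [Fintype V] (G : SimpleGraph V) : ℤ :=
  sSup {k : ℤ | ∃ S : Finset V,
    IsIndepFinset G S ∧ k = (S.card : ℤ) - ((nbhdSet G S).card : ℤ)}

/-- The splitting graph `S(G)`: vertex set `V ⊔ V'`, with the edges of `G` together with an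
edge between the copy `v'` of `v` and `u` for every edge `vu` of `G`. -/
def splittingGraph {V : Type*} (G : SimpleGraph V) : SimpleGraph (V ⊕ V) where
  Adj x y :=
    match x, y with
    | Sum.inl a, Sum.inl b => G.Adj a b
    | Sum.inl a, Sum.inr b => G.Adj a b
    | Sum.inr a, Sum.inl b => G.Adj a b
    | Sum.inr _, Sum.inr _ => False
  symm := by
    constructor
    rintro (a | a) (b | b) h
    · exact G.adj_symm h
    · exact G.adj_symm h
    · exact G.adj_symm h
    · exact h
  loopless := by
    constructor
    rintro (a | a) h
    · exact G.loopless.irrefl a h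
    · exact h

lemma splitAdj_ll {V : Type*} (G : SimpleGraph V) {a b : V} :
    (splittingGraph G).Adj (Sum.inl a) (Sum.inl b) ↔ G.Adj a b := Iff.rfl

lemma splitAdj_lr {V : Type*} (G : SimpleGraph V) {a b : V} :
    (splittingGraph G).Adj (Sum.inl a) (Sum.inr b) ↔ G.Adj a b := Iff.rfl

lemma splitAdj_rl {V : Type*} (G : SimpleGraph V) {a b : V} :
    (splittingGraph G).Adj (Sum.inr a) (Sum.inl b) ↔ G.Adj a b := Iff.rfl

lemma splitAdj_rr {V : Type*} (G : SimpleGraph V) {a b : V} :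
    ¬ (splittingGraph G).Adj (Sum.inr a) (Sum.inr b) := fun h => h

theorem stmt0 {V : Type*} [Fintype V] (G : SimpleGraph V)
    (hconn : G.Connected) (hn : 2 ≤ Fintype.card V) :
    (indepNum (splittingGraph G) : ℤ) = (Fintype.card V : ℤ) + betaStar G := by
  classical
  set n := Fintype.card V with hn_def
  -- the set defining betaStar
  set K : Set ℤ := {k : ℤ | ∃ S : Finset V,
    IsIndepFinset G S ∧ k = (S.card : ℤ) - ((nbhdSet G S).card : ℤ)} with hK
  have hKne : K.Nonempty := ⟨0, ∅, fun u hu => absurd hu (by simp), by simp [nbhdSet]⟩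
  have hKbdd : BddAbove K := by
    refine ⟨n, ?_⟩
    rintro k ⟨S, -, rfl⟩
    have h1 : S.card ≤ n := by simpa using Finset.card_le_univ S
    have h2 : (0 : ℤ) ≤ ((nbhdSet G S).card : ℤ) := by positivity
    have : (S.card : ℤ) ≤ n := by exact_mod_cast h1
    linarith
  -- the set defining indepNum of the splitting graph
  set A : Set ℕ := {k : ℕ | ∃ S : Finset (V ⊕ V),
    IsIndepFinset (splittingGraph G) S ∧ S.card = k} with hA
  have hAne : A.Nonempty := ⟨0, ∅, fun u hu => absurd hu (by simp), by simp⟩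
  have hAbdd : BddAbove A := by
    refine ⟨Fintype.card (V ⊕ V), ?_⟩
    rintro k ⟨S, -, rfl⟩
    simpa using Finset.card_le_univ S
  have hcardN : ∀ S : Finset V, (nbhdSet G S).card ≤ n := fun S => by
    simpa using Finset.card_le_univ (nbhdSet G S)
  apply le_antisymm
  · -- indepNum ≤ n + betaStar
    obtain ⟨T, hTind, hTcard⟩ : indepNum (splittingGraph G) ∈ A :=
      Nat.sSup_mem hAne hAbdd
    set SA : Finset V := Finset.univ.filter (fun a => Sum.inl a ∈ T) with hSA
    set SB : Finset V := Finset.univ.filter (fun b => Sum.inr b ∈ T) with hSB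
    have hTeq : T = SA.image Sum.inl ∪ SB.image Sum.inr := by
      ext x
      rcases x with a | b
      · simp [hSA]
      · simp [hSB]
    have hdisj : Disjoint (SA.image Sum.inl) (SB.image Sum.inr) := by
      rw [Finset.disjoint_left]
      rintro x hx hy
      simp only [Finset.mem_image] at hx hy
      obtain ⟨a, -, rfl⟩ := hx
      obtain ⟨b, -, hb⟩ := hy
      exact Sum.inl_ne_inr hb.symm
    have hTcard' : T.card = SA.card + SB.card := by
      rw [hTeq, Finset.card_union_of_disjoint hdisj,
        Finset.card_image_of_injective _ Sum.inl_injective,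
        Finset.card_image_of_injective _ Sum.inr_injective]
    have hSAind : IsIndepFinset G SA := by
      intro u hu v hv hadj
      simp only [hSA, Finset.mem_filter] at hu hv
      exact hTind _ hu.2 _ hv.2 hadj
    have hSBsub : SB ⊆ Finset.univ \ nbhdSet G SA := by
      intro b hb
      simp only [hSB, Finset.mem_filter] at hb
      have hnot : b ∉ nbhdSet G SA := by
        intro hmemN
        rw [nbhdSet, Finset.mem_filter] at hmemN
        obtain ⟨-, a, ha, hadj⟩ := hmemN
        simp only [hSA, Finset.mem_filter] at ha
        exact hTind _ ha.2 _ hb.2 hadj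
      simp [Finset.mem_sdiff, hnot]
    have hSBcard : SB.card ≤ n - (nbhdSet G SA).card := by
      calc SB.card ≤ (Finset.univ \ nbhdSet G SA).card := Finset.card_le_card hSBsub
        _ = n - (nbhdSet G SA).card := by
          rw [Finset.card_sdiff_of_subset (Finset.subset_univ _), Finset.card_univ]
    have hmem : ((SA.card : ℤ) - ((nbhdSet G SA).card : ℤ)) ∈ K := ⟨SA, hSAind, rfl⟩
    have hle : ((SA.card : ℤ) - ((nbhdSet G SA).card : ℤ)) ≤ betaStar G :=
      le_csSup hKbdd hmem
    have hNle := hcardN SA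
    have hSBcard' : (SB.card : ℤ) ≤ (n : ℤ) - ((nbhdSet G SA).card : ℤ) := by
      have := hSBcard
      omega
    have : (indepNum (splittingGraph G) : ℤ) = (SA.card : ℤ) + (SB.card : ℤ) := by
      rw [← hTcard, hTcard']; push_cast; ring
    rw [this]
    linarith
  · -- n + betaStar ≤ indepNum
    obtain ⟨S, hSind, hSval⟩ : betaStar G ∈ K := Int.csSup_mem hKne hKbdd
    set B : Finset V := Finset.univ \ nbhdSet G S with hB
    set T : Finset (V ⊕ V) := S.image Sum.inl ∪ B.image Sum.inr with hT
    have hTind : IsIndepFinset (splittingGraph G) T := by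
      intro x hx y hy hadj
      simp only [hT, Finset.mem_union, Finset.mem_image] at hx hy
      rcases x with a | a <;> rcases y with b | b
      · have ha : a ∈ S := by
          rcases hx with ⟨u, hu, h⟩ | ⟨u, hu, h⟩
          · exact (Sum.inl_injective h) ▸ hu
          · exact absurd h (Sum.inr_ne_inl)
        have hb : b ∈ S := by
          rcases hy with ⟨u, hu, h⟩ | ⟨u, hu, h⟩
          · exact (Sum.inl_injective h) ▸ hu
          · exact absurd h (Sum.inr_ne_inl)
        exact hSind a ha b hb hadj
      · have ha : a ∈ S := by
          rcases hx with ⟨u, hu, h⟩ | ⟨u, hu, h⟩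
          · exact (Sum.inl_injective h) ▸ hu
          · exact absurd h (Sum.inr_ne_inl)
        have hb : b ∈ B := by
          rcases hy with ⟨u, hu, h⟩ | ⟨u, hu, h⟩
          · exact absurd h (Sum.inl_ne_inr)
          · exact (Sum.inr_injective h) ▸ hu
        simp only [hB, Finset.mem_sdiff, nbhdSet, Finset.mem_filter, Finset.mem_univ,
          true_and] at hb
        exact hb ⟨a, ha, hadj⟩
      · have hb : b ∈ S := by
          rcases hy with ⟨u, hu, h⟩ | ⟨u, hu, h⟩
          · exact (Sum.inl_injective h) ▸ hu
          · exact absurd h (Sum.inr_ne_inl)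
        have ha : a ∈ B := by
          rcases hx with ⟨u, hu, h⟩ | ⟨u, hu, h⟩
          · exact absurd h (Sum.inl_ne_inr)
          · exact (Sum.inr_injective h) ▸ hu
        simp only [hB, Finset.mem_sdiff, nbhdSet, Finset.mem_filter, Finset.mem_univ,
          true_and] at ha
        exact ha ⟨b, hb, G.adj_symm hadj⟩
      · exact splitAdj_rr G hadj
    have hdisj : Disjoint (S.image Sum.inl) (B.image Sum.inr) := by
      rw [Finset.disjoint_left]
      rintro x hx hy
      simp only [Finset.mem_image] at hx hy
      obtain ⟨a, -, rfl⟩ := hx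
      obtain ⟨b, -, hb⟩ := hy
      exact Sum.inl_ne_inr hb.symm
    have hTcard : T.card = S.card + (n - (nbhdSet G S).card) := by
      rw [hT, Finset.card_union_of_disjoint hdisj,
        Finset.card_image_of_injective _ Sum.inl_injective,
        Finset.card_image_of_injective _ Sum.inr_injective, hB,
        Finset.card_sdiff_of_subset (Finset.subset_univ _), Finset.card_univ]
    have hle : T.card ≤ indepNum (splittingGraph G) := le_csSup hAbdd ⟨T, hTind, rfl⟩
    have hNle := hcardN S
    have : (T.card : ℤ) = (S.card : ℤ) + ((n : ℤ) - ((nbhdSet G S).card : ℤ)) := by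
      rw [hTcard]; omega
    rw [hSval]
    have hle' : (T.card : ℤ) ≤ (indepNum (splittingGraph G) : ℤ) := by exact_mod_cast hle
    linarith
end

section
/- Let G = (V,E) be a finite simple connected graph of order n ≥ 2. Then β₀(S(G)) ≥ n + β₀*(G). -/
open Classical in
lemma indep_card_le_indepNum {V : Type*} [Fintype V] (G : SimpleGraph V)
    (S : Finset V) (hS : IsIndepFinset G S) : S.card ≤ indepNum G := by
  apply le_csSup
  · refine ⟨Fintype.card V, ?_⟩
    rintro k ⟨T, _, rfl⟩
    exact T.card_le_univ
  · exact ⟨S, hS, rfl⟩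

theorem stmt14 {V : Type*} [Fintype V] (G : SimpleGraph V)
    (hconn : G.Connected) (hn : 2 ≤ Fintype.card V) :
    (Fintype.card V : ℤ) + betaStar G ≤ (indepNum (splittingGraph G) : ℤ) := by
  classical
  have key : betaStar G ≤ (indepNum (splittingGraph G) : ℤ) - Fintype.card V := by
    unfold betaStar
    apply csSup_le
    · exact ⟨0, ∅, by intro u hu; simp at hu, by simp [nbhdSet]⟩
    · rintro k ⟨S, hS, rfl⟩
      -- witness independent set in splitting graph
      set N := nbhdSet G S with hN
      set T : Finset (V ⊕ V) :=
        S.image Sum.inl ∪ (Finset.univ \ N).image Sum.inr with hT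
      have hNsub : ∀ u ∈ S, ∀ w, G.Adj u w → w ∈ N := by
        intro u hu w hadj
        simp only [hN, nbhdSet, Finset.mem_filter, Finset.mem_univ, true_and]
        exact ⟨u, hu, hadj⟩
      have hTindep : IsIndepFinset (splittingGraph G) T := by
        intro x hx y hy hadj
        simp only [hT, Finset.mem_union, Finset.mem_image, Finset.mem_sdiff,
          Finset.mem_univ, true_and] at hx hy
        rcases x with a | a <;> rcases y with b | b
        · obtain ⟨u, hu, hu2⟩ := hx.resolve_right (by rintro ⟨u, _, h⟩; exact nomatch h)
          obtain ⟨v, hv, hv2⟩ := hy.resolve_right (by rintro ⟨u, _, h⟩; exact nomatch h)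
          obtain rfl := Sum.inl_injective hu2
          obtain rfl := Sum.inl_injective hv2
          exact hS _ hu _ hv hadj
        · obtain ⟨u, hu, hu2⟩ := hx.resolve_right (by rintro ⟨u, _, h⟩; exact nomatch h)
          obtain ⟨v, hv, hv2⟩ := hy.resolve_left (by rintro ⟨u, _, h⟩; exact nomatch h)
          obtain rfl := Sum.inl_injective hu2
          obtain rfl := Sum.inr_injective hv2
          exact hv (hNsub _ hu _ hadj)
        · obtain ⟨u, hu, hu2⟩ := hx.resolve_left (by rintro ⟨u, _, h⟩; exact nomatch h)
          obtain ⟨v, hv, hv2⟩ := hy.resolve_right (by rintro ⟨u, _, h⟩; exact nomatch h)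
          obtain rfl := Sum.inr_injective hu2
          obtain rfl := Sum.inl_injective hv2
          exact hu (hNsub _ hv _ (G.adj_symm hadj))
        · exact hadj
      have hcard : T.card = S.card + (Fintype.card V - N.card) := by
        rw [hT, Finset.card_union_of_disjoint, Finset.card_image_of_injective _ Sum.inl_injective,
          Finset.card_image_of_injective _ Sum.inr_injective, Finset.card_sdiff_of_subset (Finset.subset_univ _),
            Finset.card_univ]
        · rw [Finset.disjoint_left]
          rintro x hx hy
          simp only [Finset.mem_image] at hx hy
          obtain ⟨u, _, rfl⟩ := hx
          obtain ⟨v, _, h⟩ := hy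
          exact nomatch h
      have hle : T.card ≤ indepNum (splittingGraph G) :=
        indep_card_le_indepNum _ T hTindep
      have hNle : N.card ≤ Fintype.card V := N.card_le_univ
      have : (T.card : ℤ) = S.card + Fintype.card V - N.card := by
        rw [hcard]; push_cast [Nat.cast_sub hNle]; ring
      have hle' : (T.card : ℤ) ≤ indepNum (splittingGraph G) := by exact_mod_cast hle
      omega
  linarith [key]
end

section
/- Let G = (V,E) be a finite simple connected graph of order n ≥ 2. Then β₀(S(G)) ≤ n + β₀*(G). -/
open Finset in
lemma key {V : Type*} [Fintype V] (G : SimpleGraph V)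
    (I : Finset (V ⊕ V)) (hI : IsIndepFinset (splittingGraph G) I) :
    (I.card : ℤ) ≤ (Fintype.card V : ℤ) + betaStar G := by
  classical
  set A := I.toLeft with hA
  set B := I.toRight with hB
  have hAind : IsIndepFinset G A := by
    intro u hu v hv h
    exact hI (Sum.inl u) (Finset.mem_toLeft.1 hu) (Sum.inl v) (Finset.mem_toLeft.1 hv) h
  have hBsub : B ⊆ Finset.univ \ nbhdSet G A := by
    intro b hb
    rw [Finset.mem_sdiff]
    refine ⟨Finset.mem_univ _, fun hmem => ?_⟩
    simp only [nbhdSet, Finset.mem_filter] at hmem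
    obtain ⟨-, a, ha, hadj⟩ := hmem
    exact hI (Sum.inl a) (Finset.mem_toLeft.1 ha) (Sum.inr b) (Finset.mem_toRight.1 hb) hadj
  have hNsub : (nbhdSet G A).card ≤ Fintype.card V := Finset.card_le_univ _
  have hBcard : B.card ≤ Fintype.card V - (nbhdSet G A).card := by
    calc B.card ≤ (Finset.univ \ nbhdSet G A).card := Finset.card_le_card hBsub
    _ = Fintype.card V - (nbhdSet G A).card := by
        rw [Finset.card_sdiff_of_subset (Finset.subset_univ _), Finset.card_univ]
  have hbs : (A.card : ℤ) - ((nbhdSet G A).card : ℤ) ≤ betaStar G := by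
    apply le_csSup
    · refine ⟨(Fintype.card V : ℤ), ?_⟩
      rintro k ⟨S, -, rfl⟩
      have := Finset.card_le_univ S
      have : (S.card : ℤ) ≤ Fintype.card V := by exact_mod_cast this
      omega
    · exact ⟨A, hAind, rfl⟩
  have hsum : A.card + B.card = I.card := Finset.card_toLeft_add_card_toRight
  have hBcard' : (B.card : ℤ) ≤ (Fintype.card V : ℤ) - ((nbhdSet G A).card : ℤ) := by
    have := hBcard
    omega
  omega

theorem stmt15 {V : Type*} [Fintype V] (G : SimpleGraph V)
    (hconn : G.Connected) (hn : 2 ≤ Fintype.card V) :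
    (indepNum (splittingGraph G) : ℤ) ≤ (Fintype.card V : ℤ) + betaStar G := by
  classical
  have hbs0 : 0 ≤ betaStar G := by
    apply le_csSup
    · refine ⟨(Fintype.card V : ℤ), ?_⟩
      rintro k ⟨S, -, rfl⟩
      have := Finset.card_le_univ S
      have : (S.card : ℤ) ≤ Fintype.card V := by exact_mod_cast this
      omega
    · exact ⟨∅, by intro u hu; simp at hu, by simp [nbhdSet]⟩
  set m : ℤ := (Fintype.card V : ℤ) + betaStar G with hm
  have hm0 : 0 ≤ m := by positivity
  have : indepNum (splittingGraph G) ≤ m.toNat := by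
    apply csSup_le
    · exact ⟨0, ∅, by intro u hu; simp at hu, rfl⟩
    · rintro k ⟨I, hI, rfl⟩
      have := key G I hI
      omega
  calc (indepNum (splittingGraph G) : ℤ) ≤ (m.toNat : ℤ) := by exact_mod_cast this
  _ = m := Int.toNat_of_nonneg hm0
end
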